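/- The Motzkin polynomial f = x⁴y² + x²y⁴ − 3x²y²z² + z⁶ ∈ ℝ[x,y,z] is nonnegative on ℝ³ but does not admit a SOS decomposition: there do not exist r ∈ ℕ and polynomials p₁,…,p_r ∈ ℝ[x,y,z] with f = Σ_{i=1}^r p_i². -/

import Mathlib

open MvPolynomial

namespace MotzkinAux

open Finsupp

noncomputable def E (a b c : ℕ) : Fin 3 →₀ ℕ := Finsupp.equivFunOnFinite.symm ![a,b,c]

@[simp] lemma E_apply0 (a b c : ℕ) : E a b c 0 = a := rfl
@[simp] lemma E_apply1 (a b c : ℕ) : E a b c 1 = b := rfl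
@[simp] lemma E_apply2 (a b c : ℕ) : E a b c 2 = c := rfl

lemma E_eq_iff {a b c a' b' c' : ℕ} : E a b c = E a' b' c' ↔ (a = a' ∧ b = b' ∧ c = c') := by
  constructor
  · intro h
    exact ⟨by simpa using DFunLike.congr_fun h 0, by simpa using DFunLike.congr_fun h 1,
      by simpa using DFunLike.congr_fun h 2⟩
  · rintro ⟨rfl, rfl, rfl⟩; rfl

lemma eq_E (d : Fin 3 →₀ ℕ) : d = E (d 0) (d 1) (d 2) := by
  ext j; fin_cases j <;> simp

lemma eq_E_of {a : Fin 3 →₀ ℕ} {x y z : ℕ} (h0 : a 0 = x) (h1 : a 1 = y) (h2 : a 2 = z) :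
    a = E x y z := by
  rw [← h0, ← h1, ← h2]; exact eq_E a

lemma deg3 (d : Fin 3 →₀ ℕ) : d.degree = d 0 + d 1 + d 2 := by
  rw [Finsupp.degree, ← Fin.sum_univ_three (fun i => d i)]
  exact Finset.sum_subset (Finset.subset_univ _) (by simp)

lemma E_degree (a b c : ℕ) : (E a b c).degree = a + b + c := by simp [deg3]

lemma degree_add3 (a b : Fin 3 →₀ ℕ) : (a + b).degree = a.degree + b.degree := by
  simp [deg3]; ring

lemma coeff_eq_zero_of_hc {p : MvPolynomial (Fin 3) ℝ} {d : Fin 3 →₀ ℕ}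
    (h : homogeneousComponent d.degree p = 0) : coeff d p = 0 := by
  have := coeff_homogeneousComponent (d.degree) p d
  simpa [h] using this.symm

lemma isHomog_of_coeff {p : MvPolynomial (Fin 3) ℝ} {n : ℕ}
    (h : ∀ d : Fin 3 →₀ ℕ, coeff d p ≠ 0 → d.degree = n) : p.IsHomogeneous n := by
  intro d hd
  rw [show (1 : Fin 3 → ℕ) = fun _ => 1 from rfl, ← Finsupp.degree_eq_weight_one]
  exact h d hd

lemma sos_zero {n : ℕ} (g : Fin n → MvPolynomial (Fin 3) ℝ)
    (h : ∑ i, (g i)^2 = 0) (i : Fin n) : g i = 0 := by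
  apply MvPolynomial.funext (R := ℝ)
  intro x
  have hx : ∑ j, (eval x (g j))^2 = 0 := by
    have := congrArg (eval x) h
    simpa [map_sum] using this
  have := (Finset.sum_eq_zero_iff_of_nonneg
    (fun j _ => sq_nonneg (eval x (g j)))).mp hx i (Finset.mem_univ i)
  simpa using pow_eq_zero_iff (n := 2) (by norm_num) |>.mp this

lemma hc_sq (p : MvPolynomial (Fin 3) ℝ) (k : ℕ)
    (h : (∀ l, k < l → homogeneousComponent l p = 0) ∨
         (∀ l, l < k → homogeneousComponent l p = 0)) :
    homogeneousComponent (2*k) (p^2) = (homogeneousComponent k p)^2 := by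
  have hz : ∀ d : Fin 3 →₀ ℕ, d.degree ≠ k → ∀ d' : Fin 3 →₀ ℕ, d.degree + d'.degree = 2*k →
      coeff d p * coeff d' p = 0 := by
    intro d hd d' hsum
    rcases h with h | h
    · rcases lt_or_gt_of_ne hd with hlt | hgt
      · have : k < d'.degree := by omega
        rw [coeff_eq_zero_of_hc (h _ this), mul_zero]
      · rw [coeff_eq_zero_of_hc (h _ hgt), zero_mul]
    · rcases lt_or_gt_of_ne hd with hlt | hgt
      · rw [coeff_eq_zero_of_hc (h _ hlt), zero_mul]
      · have : d'.degree < k := by omega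
        rw [coeff_eq_zero_of_hc (h _ this), mul_zero]
  ext m
  rw [sq, sq, coeff_homogeneousComponent, coeff_mul, coeff_mul]
  by_cases hm : m.degree = 2*k
  · rw [if_pos hm]
    apply Finset.sum_congr rfl
    rintro ⟨a, b⟩ hab
    rw [Finset.HasAntidiagonal.mem_antidiagonal] at hab
    have hdsum : a.degree + b.degree = 2*k := by rw [← degree_add3, hab, hm]
    simp only [coeff_homogeneousComponent]
    by_cases ha : a.degree = k
    · have hb : b.degree = k := by omega
      rw [if_pos ha, if_pos hb]
    · rw [if_neg ha, zero_mul]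
      exact hz a ha b hdsum
  · rw [if_neg hm]
    symm
    apply Finset.sum_eq_zero
    rintro ⟨a, b⟩ hab
    rw [Finset.HasAntidiagonal.mem_antidiagonal] at hab
    simp only [coeff_homogeneousComponent]
    by_cases ha : a.degree = k
    · by_cases hb : b.degree = k
      · exfalso; apply hm; rw [← hab, degree_add3, ha, hb]; ring
      · rw [if_neg hb, mul_zero]
    · rw [if_neg ha, zero_mul]

lemma homog_of_sos {r : ℕ} (p : Fin r → MvPolynomial (Fin 3) ℝ)
    (F : MvPolynomial (Fin 3) ℝ) (hF : F.IsHomogeneous 6) (hf : F = ∑ i, p i ^ 2) :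
    ∀ i, (p i).IsHomogeneous 3 := by
  have hcF : ∀ d, d ≠ 6 → homogeneousComponent d F = 0 := by
    intro d hd
    ext m
    rw [coeff_homogeneousComponent, coeff_zero]
    by_cases hm : m.degree = d
    · rw [if_pos hm]
      exact hF.coeff_eq_zero (by rw [hm]; exact hd)
    · rw [if_neg hm]
  have hsum : ∀ d, homogeneousComponent d F = ∑ i, homogeneousComponent d (p i ^ 2) := by
    intro d
    rw [hf, map_sum]
  set N := Finset.univ.sup (fun i => (p i).totalDegree) with hN
  have key : ∀ k, (k = 0 ∨ k = 1 ∨ k = 2 ∨ 4 ≤ k) → ∀ i, homogeneousComponent k (p i) = 0 := by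
    have Hdown : ∀ j k, 4 ≤ k → N < k + j → ∀ i, homogeneousComponent k (p i) = 0 := by
      intro j
      induction j with
      | zero =>
        intro k h4 hk i
        apply homogeneousComponent_eq_zero
        calc (p i).totalDegree ≤ N :=
              Finset.le_sup (f := fun i => (p i).totalDegree) (Finset.mem_univ i)
        _ < k := by omega
      | succ j IH =>
        intro k h4 hk i
        have hhi : ∀ i', ∀ l, k < l → homogeneousComponent l (p i') = 0 := by
          intro i' l hl
          exact IH l (by omega) (by omega) i'
        have hsq : ∀ i', homogeneousComponent (2*k) (p i' ^ 2)
            = (homogeneousComponent k (p i'))^2 := fun i' => hc_sq _ _ (Or.inl (hhi i'))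
        have h0 : (0 : MvPolynomial (Fin 3) ℝ) = ∑ i', (homogeneousComponent k (p i'))^2 := by
          rw [← hcF (2*k) (by omega), hsum]
          exact Finset.sum_congr rfl (fun i' _ => hsq i')
        exact sos_zero _ h0.symm i
    have H4 : ∀ k, 4 ≤ k → ∀ i, homogeneousComponent k (p i) = 0 := by
      intro k h4 i
      exact Hdown (N+1) k h4 (by omega) i
    have Hup : ∀ k, k ≤ 2 → (∀ l, l < k → ∀ i, homogeneousComponent l (p i) = 0) →
        ∀ i, homogeneousComponent k (p i) = 0 := by
      intro k hk2 hlow i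
      have hsq : ∀ i', homogeneousComponent (2*k) (p i' ^ 2)
          = (homogeneousComponent k (p i'))^2 :=
        fun i' => hc_sq _ _ (Or.inr (fun l hl => hlow l hl i'))
      have h0 : (0 : MvPolynomial (Fin 3) ℝ) = ∑ i', (homogeneousComponent k (p i'))^2 := by
        rw [← hcF (2*k) (by omega), hsum]
        exact Finset.sum_congr rfl (fun i' _ => hsq i')
      exact sos_zero _ h0.symm i
    have H0 : ∀ i, homogeneousComponent 0 (p i) = 0 :=
      Hup 0 (by omega) (by omega)
    have H1 : ∀ i, homogeneousComponent 1 (p i) = 0 :=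
      Hup 1 (by omega) (by intro l hl; interval_cases l; exact H0)
    have H2 : ∀ i, homogeneousComponent 2 (p i) = 0 :=
      Hup 2 (by omega) (by intro l hl; interval_cases l; exacts [H0, H1])
    rintro k (rfl | rfl | rfl | h4) i
    exacts [H0 i, H1 i, H2 i, H4 k h4 i]
  intro i
  apply isHomog_of_coeff
  intro d hd
  by_contra hne
  exact hd (coeff_eq_zero_of_hc (key d.degree (by omega) i))

noncomputable def F : MvPolynomial (Fin 3) ℝ :=
  (X 0) ^ 4 * (X 1) ^ 2 + (X 0) ^ 2 * (X 1) ^ 4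
    - 3 * (X 0) ^ 2 * (X 1) ^ 2 * (X 2) ^ 2 + (X 2) ^ 6

lemma F_eq : F = monomial (E 4 2 0) 1 + monomial (E 2 4 0) 1
    + monomial (E 2 2 2) (-3) + monomial (E 0 0 6) 1 := by
  have e1 : Finsupp.single (0 : Fin 3) 4 + Finsupp.single 1 2 = E 4 2 0 := by
    ext j; fin_cases j <;> simp [Finsupp.single_apply]
  have e2 : Finsupp.single (0 : Fin 3) 2 + Finsupp.single 1 4 = E 2 4 0 := by
    ext j; fin_cases j <;> simp [Finsupp.single_apply]
  have e3 : Finsupp.single (0 : Fin 3) 2 + Finsupp.single 1 2 + Finsupp.single 2 2 = E 2 2 2 := by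
    ext j; fin_cases j <;> simp [Finsupp.single_apply]
  have e4 : Finsupp.single (2 : Fin 3) 6 = E 0 0 6 := by
    ext j; fin_cases j <;> simp [Finsupp.single_apply]
  rw [F, show (3 : MvPolynomial (Fin 3) ℝ) = C (3:ℝ) from (map_ofNat C 3).symm]
  simp only [X_pow_eq_monomial, C_mul_monomial, monomial_mul, e1, e2, e3, e4,
    sub_eq_add_neg, ← map_neg]
  norm_num

lemma F_hom : F.IsHomogeneous 6 := by
  rw [F_eq]
  exact (((isHomogeneous_monomial _ (by rw [E_degree])).add
    (isHomogeneous_monomial _ (by rw [E_degree]))).add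
    (isHomogeneous_monomial _ (by rw [E_degree]))).add
    (isHomogeneous_monomial _ (by rw [E_degree]))

lemma degree_three {p : MvPolynomial (Fin 3) ℝ} (hp : p.IsHomogeneous 3)
    {a : Fin 3 →₀ ℕ} (ha : coeff a p ≠ 0) : a 0 + a 1 + a 2 = 3 := by
  have hd : a.degree = 3 := by
    by_contra h
    exact ha (hp.coeff_eq_zero h)
  rwa [deg3] at hd

lemma coeff_sq_eq {p : MvPolynomial (Fin 3) ℝ} (m a₀ : Fin 3 →₀ ℕ) (hm : a₀ + a₀ = m)
    (huniq : ∀ a b : Fin 3 →₀ ℕ, a + b = m → coeff a p ≠ 0 → coeff b p ≠ 0 → a = a₀) :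
    coeff m (p^2) = (coeff a₀ p)^2 := by
  rw [sq, coeff_mul, sq]
  apply Finset.sum_eq_single_of_mem (a₀, a₀) (Finset.HasAntidiagonal.mem_antidiagonal.2 hm)
  rintro ⟨a, b⟩ hab hne
  rw [Finset.HasAntidiagonal.mem_antidiagonal] at hab
  by_contra h
  have ha : coeff a p ≠ 0 := fun h' => h (by rw [h', zero_mul])
  have hb : coeff b p ≠ 0 := fun h' => h (by rw [h', mul_zero])
  have h1 := huniq a b hab ha hb
  have h2 := huniq b a (by rwa [add_comm]) hb ha
  exact hne (by rw [h1, h2])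

set_option maxHeartbeats 2000000 in
lemma no_sos {r : ℕ} (p : Fin r → MvPolynomial (Fin 3) ℝ) (hf : F = ∑ i, p i ^ 2) : False := by
  have hp : ∀ i, (p i).IsHomogeneous 3 := homog_of_sos p F F_hom hf
  have hcoeff : ∀ m : Fin 3 →₀ ℕ, coeff m F = ∑ i, coeff m (p i ^ 2) := by
    intro m
    rw [hf, coeff_sum]
  -- generic step
  have step : ∀ (m a₀ : Fin 3 →₀ ℕ), a₀ + a₀ = m →
      (∀ i, ∀ a b : Fin 3 →₀ ℕ, a + b = m →
        coeff a (p i) ≠ 0 → coeff b (p i) ≠ 0 → a = a₀) →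
      coeff m F = ∑ i, (coeff a₀ (p i))^2 := by
    intro m a₀ hm huniq
    rw [hcoeff m]
    exact Finset.sum_congr rfl (fun i _ => coeff_sq_eq m a₀ hm (huniq i))
  have zstep : ∀ (m a₀ : Fin 3 →₀ ℕ), coeff m F = 0 → a₀ + a₀ = m →
      (∀ i, ∀ a b : Fin 3 →₀ ℕ, a + b = m →
        coeff a (p i) ≠ 0 → coeff b (p i) ≠ 0 → a = a₀) →
      ∀ i, coeff a₀ (p i) = 0 := by
    intro m a₀ h0 hm huniq i
    have hs := step m a₀ hm huniq
    rw [h0] at hs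
    have := (Finset.sum_eq_zero_iff_of_nonneg
      (fun j _ => sq_nonneg (coeff a₀ (p j)))).mp hs.symm i (Finset.mem_univ i)
    simpa using pow_eq_zero_iff (n := 2) (by norm_num) |>.mp this
  have cF : ∀ a b c : ℕ, coeff (E a b c) F =
      (if (4,2,0) = (a,b,c) then 1 else 0) + (if (2,4,0) = (a,b,c) then 1 else 0)
      + (if (2,2,2) = (a,b,c) then (-3:ℝ) else 0) + (if (0,0,6) = (a,b,c) then 1 else 0) := by
    intro a b c
    rw [F_eq]
    simp only [coeff_add, coeff_monomial, E_eq_iff, Prod.mk.injEq]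
  have hdbl : ∀ a b c : ℕ, E a b c + E a b c = E (2*a) (2*b) (2*c) := by
    intro a b c; ext j; fin_cases j <;> simp <;> ring
  have hco : ∀ {i : Fin r} {a : Fin 3 →₀ ℕ}, coeff a (p i) ≠ 0 → a 0 + a 1 + a 2 = 3 :=
    fun {i a} ha => degree_three (hp i) ha
  have c600 : coeff (E 6 0 0) F = 0 := by rw [cF]; norm_num
  have c060 : coeff (E 0 6 0) F = 0 := by rw [cF]; norm_num
  have c402 : coeff (E 4 0 2) F = 0 := by rw [cF]; norm_num
  have c042 : coeff (E 0 4 2) F = 0 := by rw [cF]; norm_num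
  have c204 : coeff (E 2 0 4) F = 0 := by rw [cF]; norm_num
  have c024 : coeff (E 0 2 4) F = 0 := by rw [cF]; norm_num
  have c222 : coeff (E 2 2 2) F = -3 := by rw [cF]; norm_num
  have h300 : ∀ i, coeff (E 3 0 0) (p i) = 0 := by
    apply zstep _ _ c600 (by simpa using hdbl 3 0 0)
    intro i a b hab ha hb
    have da := hco ha; have db := hco hb
    have e0 : a 0 + b 0 = 6 := by simpa using DFunLike.congr_fun hab 0
    have e1 : a 1 + b 1 = 0 := by simpa using DFunLike.congr_fun hab 1
    have e2 : a 2 + b 2 = 0 := by simpa using DFunLike.congr_fun hab 2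
    exact eq_E_of (by omega) (by omega) (by omega)
  have h030 : ∀ i, coeff (E 0 3 0) (p i) = 0 := by
    apply zstep _ _ c060 (by simpa using hdbl 0 3 0)
    intro i a b hab ha hb
    have da := hco ha; have db := hco hb
    have e0 : a 0 + b 0 = 0 := by simpa using DFunLike.congr_fun hab 0
    have e1 : a 1 + b 1 = 6 := by simpa using DFunLike.congr_fun hab 1
    have e2 : a 2 + b 2 = 0 := by simpa using DFunLike.congr_fun hab 2
    exact eq_E_of (by omega) (by omega) (by omega)
  have h201 : ∀ i, coeff (E 2 0 1) (p i) = 0 := by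
    apply zstep _ _ c402 (by simpa using hdbl 2 0 1)
    intro i a b hab ha hb
    have da := hco ha; have db := hco hb
    have e0 : a 0 + b 0 = 4 := by simpa using DFunLike.congr_fun hab 0
    have e1 : a 1 + b 1 = 0 := by simpa using DFunLike.congr_fun hab 1
    have e2 : a 2 + b 2 = 2 := by simpa using DFunLike.congr_fun hab 2
    have hcase : (a 0 = 3 ∧ a 1 = 0 ∧ a 2 = 0) ∨ (b 0 = 3 ∧ b 1 = 0 ∧ b 2 = 0)
        ∨ (a 0 = 2 ∧ a 1 = 0 ∧ a 2 = 1) := by omega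
    rcases hcase with ⟨u,v,w⟩|⟨u,v,w⟩|⟨u,v,w⟩
    · exfalso; apply ha; rw [eq_E_of u v w]; exact h300 i
    · exfalso; apply hb; rw [eq_E_of u v w]; exact h300 i
    · exact eq_E_of u v w
  have h021 : ∀ i, coeff (E 0 2 1) (p i) = 0 := by
    apply zstep _ _ c042 (by simpa using hdbl 0 2 1)
    intro i a b hab ha hb
    have da := hco ha; have db := hco hb
    have e0 : a 0 + b 0 = 0 := by simpa using DFunLike.congr_fun hab 0
    have e1 : a 1 + b 1 = 4 := by simpa using DFunLike.congr_fun hab 1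
    have e2 : a 2 + b 2 = 2 := by simpa using DFunLike.congr_fun hab 2
    have hcase : (a 0 = 0 ∧ a 1 = 3 ∧ a 2 = 0) ∨ (b 0 = 0 ∧ b 1 = 3 ∧ b 2 = 0)
        ∨ (a 0 = 0 ∧ a 1 = 2 ∧ a 2 = 1) := by omega
    rcases hcase with ⟨u,v,w⟩|⟨u,v,w⟩|⟨u,v,w⟩
    · exfalso; apply ha; rw [eq_E_of u v w]; exact h030 i
    · exfalso; apply hb; rw [eq_E_of u v w]; exact h030 i
    · exact eq_E_of u v w
  have h102 : ∀ i, coeff (E 1 0 2) (p i) = 0 := by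
    apply zstep _ _ c204 (by simpa using hdbl 1 0 2)
    intro i a b hab ha hb
    have da := hco ha; have db := hco hb
    have e0 : a 0 + b 0 = 2 := by simpa using DFunLike.congr_fun hab 0
    have e1 : a 1 + b 1 = 0 := by simpa using DFunLike.congr_fun hab 1
    have e2 : a 2 + b 2 = 4 := by simpa using DFunLike.congr_fun hab 2
    have hcase : (a 0 = 2 ∧ a 1 = 0 ∧ a 2 = 1) ∨ (b 0 = 2 ∧ b 1 = 0 ∧ b 2 = 1)
        ∨ (a 0 = 1 ∧ a 1 = 0 ∧ a 2 = 2) := by omega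
    rcases hcase with ⟨u,v,w⟩|⟨u,v,w⟩|⟨u,v,w⟩
    · exfalso; apply ha; rw [eq_E_of u v w]; exact h201 i
    · exfalso; apply hb; rw [eq_E_of u v w]; exact h201 i
    · exact eq_E_of u v w
  have h012 : ∀ i, coeff (E 0 1 2) (p i) = 0 := by
    apply zstep _ _ c024 (by simpa using hdbl 0 1 2)
    intro i a b hab ha hb
    have da := hco ha; have db := hco hb
    have e0 : a 0 + b 0 = 0 := by simpa using DFunLike.congr_fun hab 0
    have e1 : a 1 + b 1 = 2 := by simpa using DFunLike.congr_fun hab 1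
    have e2 : a 2 + b 2 = 4 := by simpa using DFunLike.congr_fun hab 2
    have hcase : (a 0 = 0 ∧ a 1 = 2 ∧ a 2 = 1) ∨ (b 0 = 0 ∧ b 1 = 2 ∧ b 2 = 1)
        ∨ (a 0 = 0 ∧ a 1 = 1 ∧ a 2 = 2) := by omega
    rcases hcase with ⟨u,v,w⟩|⟨u,v,w⟩|⟨u,v,w⟩
    · exfalso; apply ha; rw [eq_E_of u v w]; exact h021 i
    · exfalso; apply hb; rw [eq_E_of u v w]; exact h021 i
    · exact eq_E_of u v w
  have hu7 : ∀ (i : Fin r), ∀ a b : Fin 3 →₀ ℕ, a + b = E 2 2 2 →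
      coeff a (p i) ≠ 0 → coeff b (p i) ≠ 0 → a = E 1 1 1 := by
    intro i a b hab ha hb
    have da := hco ha; have db := hco hb
    have e0 : a 0 + b 0 = 2 := by simpa using DFunLike.congr_fun hab 0
    have e1 : a 1 + b 1 = 2 := by simpa using DFunLike.congr_fun hab 1
    have e2 : a 2 + b 2 = 2 := by simpa using DFunLike.congr_fun hab 2
    have hcase : (a 0 = 2 ∧ a 1 = 0 ∧ a 2 = 1) ∨ (a 0 = 0 ∧ a 1 = 2 ∧ a 2 = 1)
        ∨ (a 0 = 1 ∧ a 1 = 0 ∧ a 2 = 2) ∨ (a 0 = 0 ∧ a 1 = 1 ∧ a 2 = 2)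
        ∨ (b 0 = 0 ∧ b 1 = 1 ∧ b 2 = 2) ∨ (b 0 = 1 ∧ b 1 = 0 ∧ b 2 = 2)
        ∨ (a 0 = 1 ∧ a 1 = 1 ∧ a 2 = 1) := by
      rcases (by omega : a 0 = 0 ∨ a 0 = 1 ∨ a 0 = 2) with h|h|h <;>
      rcases (by omega : a 1 = 0 ∨ a 1 = 1 ∨ a 1 = 2) with h'|h'|h' <;>
      omega
    rcases hcase with ⟨u,v,w⟩|⟨u,v,w⟩|⟨u,v,w⟩|⟨u,v,w⟩|⟨u,v,w⟩|⟨u,v,w⟩|⟨u,v,w⟩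
    · exfalso; apply ha; rw [eq_E_of u v w]; exact h201 i
    · exfalso; apply ha; rw [eq_E_of u v w]; exact h021 i
    · exfalso; apply ha; rw [eq_E_of u v w]; exact h102 i
    · exfalso; apply ha; rw [eq_E_of u v w]; exact h012 i
    · exfalso; apply hb; rw [eq_E_of u v w]; exact h012 i
    · exfalso; apply hb; rw [eq_E_of u v w]; exact h102 i
    · exact eq_E_of u v w
  have hfin : coeff (E 2 2 2) F = ∑ i, (coeff (E 1 1 1) (p i))^2 :=
    step _ _ (by simpa using hdbl 1 1 1) hu7
  rw [c222] at hfin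
  have hnn : (0:ℝ) ≤ ∑ i, (coeff (E 1 1 1) (p i))^2 :=
    Finset.sum_nonneg (fun i _ => sq_nonneg _)
  linarith

end MotzkinAux

theorem motzkin_nonneg_and_not_sos :
    (∀ x : Fin 3 → ℝ, 0 ≤ MvPolynomial.eval x
      ((X 0) ^ 4 * (X 1) ^ 2 + (X 0) ^ 2 * (X 1) ^ 4
        - 3 * (X 0) ^ 2 * (X 1) ^ 2 * (X 2) ^ 2 + (X 2) ^ 6 : MvPolynomial (Fin 3) ℝ)) ∧
    ¬ ∃ (r : ℕ) (p : Fin r → MvPolynomial (Fin 3) ℝ),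
      ((X 0) ^ 4 * (X 1) ^ 2 + (X 0) ^ 2 * (X 1) ^ 4
        - 3 * (X 0) ^ 2 * (X 1) ^ 2 * (X 2) ^ 2 + (X 2) ^ 6 : MvPolynomial (Fin 3) ℝ)
        = ∑ i, (p i) ^ 2 := by
  constructor
  · intro v
    have hev : MvPolynomial.eval v
        ((X 0) ^ 4 * (X 1) ^ 2 + (X 0) ^ 2 * (X 1) ^ 4
          - 3 * (X 0) ^ 2 * (X 1) ^ 2 * (X 2) ^ 2 + (X 2) ^ 6 : MvPolynomial (Fin 3) ℝ)
        = (v 0)^4*(v 1)^2 + (v 0)^2*(v 1)^4 - 3*(v 0)^2*(v 1)^2*(v 2)^2 + (v 2)^6 := by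
      simp
    rw [hev]
    set x := v 0; set y := v 1; set z := v 2
    have h1 : |x*y|^2 = x^2*y^2 := by rw [sq_abs]; ring
    have h2 : 0 ≤ x^2 + y^2 - 2*|x*y| := by
      nlinarith [sq_nonneg (|x| - |y|), sq_abs x, sq_abs y, abs_mul x y,
        abs_nonneg x, abs_nonneg y]
    have h3 : 0 ≤ (|x*y| - z^2)^2 * (2*|x*y| + z^2) :=
      mul_nonneg (sq_nonneg _) (by positivity)
    have h4 : 0 ≤ |x*y|^2 * (x^2+y^2-2*|x*y|) := mul_nonneg (sq_nonneg _) h2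
    nlinarith [h1, h3, h4]
  · rintro ⟨r, p, hf⟩
    exact MotzkinAux.no_sos p hf
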